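/- (Abstract form of the H_n example.) Let f be a loop-count function on states of n crossings that is pseudo-adequate (f(Function.update s_A i true) ≤ f(s_A) and f(Function.update s_B i false) ≤ f(s_B) for every i) and satisfies f(s_A) = f(s_B) = 1. Then span ⟨f⟩ = 2n, where ⟨f⟩ := Σ_s w(s); in particular, if n is odd then span ⟨f⟩ is not divisible by 4. -/

import Mathlib

open LaurentPolynomial

/-- Maximal degree (max of the support), with convention `odeg 0 = 0`. -/
noncomputable def odeg (g : LaurentPolynomial ℤ) : ℤ := WithBot.unbotD 0 g.coeff.support.max

/-- Minimal degree (min of the support), with convention `udeg 0 = 0`. -/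
noncomputable def udeg (g : LaurentPolynomial ℤ) : ℤ := WithTop.untopD 0 g.coeff.support.min

/-- The span of a Laurent polynomial. -/
noncomputable def lspan (g : LaurentPolynomial ℤ) : ℤ := odeg g - udeg g

/-- Number of crossings spliced by an A-splice in the state `s`. -/
def alpha {n : ℕ} (s : Fin n → Bool) : ℕ :=
  (Finset.univ.filter (fun i => s i = false)).card

/-- Number of crossings spliced by a B-splice in the state `s`. -/
def beta {n : ℕ} (s : Fin n → Bool) : ℕ :=
  (Finset.univ.filter (fun i => s i = true)).card

/-- A loop-count function: at least one loop in every state, and changing the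
splice at one crossing changes the number of loops by at most one. -/
def IsLoopCount {n : ℕ} (f : (Fin n → Bool) → ℕ) : Prop :=
  (∀ s, 1 ≤ f s) ∧
    ∀ (s : Fin n → Bool) (i : Fin n),
      |(f (Function.update s i (!(s i))) : ℤ) - (f s : ℤ)| ≤ 1

/-- The weight `A^(α(s)-β(s)) * (-A^2 - A^(-2))^(f(s)-1)` of a state `s`. -/
noncomputable def weight {n : ℕ} (f : (Fin n → Bool) → ℕ) (s : Fin n → Bool) :
    LaurentPolynomial ℤ :=
  T ((alpha s : ℤ) - (beta s : ℤ)) * (-T 2 - T (-2)) ^ (f s - 1)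

/-- The Kauffman bracket of a loop-count function: the sum of the weights. -/
noncomputable def bracket {n : ℕ} (f : (Fin n → Bool) → ℕ) : LaurentPolynomial ℤ :=
  ∑ s : Fin n → Bool, weight f s


noncomputable def P : LaurentPolynomial ℤ := T 2 + T (-2)

lemma P_pow_bound (m : ℕ) :
    (∀ k : ℤ, 2 * m < k → (P ^ m).coeff k = 0) ∧ (P ^ m).coeff (2 * m) = 1 ∧
    (∀ k : ℤ, k < -(2 * m) → (P ^ m).coeff k = 0) ∧ (P ^ m).coeff (-(2 * m)) = 1 := by
  induction m with
  | zero =>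
    refine ⟨fun k hk => ?_, ?_, fun k hk => ?_, ?_⟩ <;>
      simp only [pow_zero, ← LaurentPolynomial.T_zero, T_apply, Nat.cast_zero, mul_zero] <;>
      first
        | (rw [if_neg]; omega)
        | simp
  | succ m ih =>
    obtain ⟨h1, h2, h3, h4⟩ := ih
    have key : ∀ k : ℤ, (P ^ (m + 1)).coeff k = (P ^ m).coeff (k - 2) + (P ^ m).coeff (k + 2) := by
      intro k
      rw [pow_succ, show (P : LaurentPolynomial ℤ) = AddMonoidAlgebra.single 2 1 + AddMonoidAlgebra.single (-2) 1
        from rfl, mul_add, AddMonoidAlgebra.coeff_add, Finsupp.add_apply, AddMonoidAlgebra.coeff_mul_single_apply,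
        AddMonoidAlgebra.coeff_mul_single_apply]
      ring_nf
    refine ⟨fun k hk => ?_, ?_, fun k hk => ?_, ?_⟩
    · rw [key]
      rw [h1 _ (by push_cast at hk ⊢; omega), h1 _ (by push_cast at hk ⊢; omega), add_zero]
    · have e1 : (2 * ((m + 1 : ℕ) : ℤ) - 2 : ℤ) = 2 * m := by push_cast; ring
      rw [key, e1, h2, h1 _ (by push_cast; omega), add_zero]
    · rw [key]
      rw [h3 _ (by push_cast at hk ⊢; omega), h3 _ (by push_cast at hk ⊢; omega), add_zero]
    · have e1 : (-(2 * ((m + 1 : ℕ) : ℤ)) + 2 : ℤ) = -(2 * m) := by push_cast; ring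
      rw [key, e1, h4, h3 _ (by push_cast; omega), zero_add]

lemma negP_eq : (-T 2 - T (-2) : LaurentPolynomial ℤ) = -P := by rw [P]; ring

lemma T_mul_apply (d k : ℤ) (g : LaurentPolynomial ℤ) : ((T d * g : LaurentPolynomial ℤ)).coeff k = g.coeff (k - d) := by
  rw [show (T d : LaurentPolynomial ℤ) = AddMonoidAlgebra.single d 1 from rfl,
    AddMonoidAlgebra.coeff_single_mul_apply, one_mul, neg_add_eq_sub]

lemma negP_pow_apply_eq_zero {m : ℕ} {k : ℤ} (hk : 2 * m < k ∨ k < -(2 * m)) :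
    ((-P) ^ m).coeff k = 0 := by
  have h0 : (P ^ m).coeff k = 0 := by
    rcases hk with hk | hk
    · exact (P_pow_bound m).1 k hk
    · exact (P_pow_bound m).2.2.1 k hk
  rcases Nat.even_or_odd m with he | ho
  · rw [he.neg_pow]; exact h0
  · rw [ho.neg_pow, AddMonoidAlgebra.coeff_neg, Finsupp.neg_apply, h0, neg_zero]

lemma all_eq_of_card_zero {n : ℕ} {s : Fin n → Bool} {b : Bool}
    (h : (Finset.univ.filter fun i => s i = b).card = 0) : s = fun _ => !b := by
  funext j
  rw [Finset.card_eq_zero] at h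
  have hj : j ∉ Finset.univ.filter fun i => s i = b := by rw [h]; exact Finset.notMem_empty j
  simp only [Finset.mem_filter, Finset.mem_univ, true_and] at hj
  cases hb : s j <;> cases b <;> simp_all

lemma count_bound {n : ℕ} (f : (Fin n → Bool) → ℕ) (hf : IsLoopCount f) (b : Bool)
    (hadj : ∀ i, f (Function.update (fun _ => !b) i b) ≤ f (fun _ => !b))
    (hc : f (fun _ => !b) = 1) :
    ∀ (k : ℕ) (s : Fin n → Bool), (Finset.univ.filter fun i => s i = b).card = k →
      f s ≤ max 1 k := by
  intro k
  induction k with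
  | zero =>
    intro s hs
    rw [all_eq_of_card_zero hs, hc]
    exact le_max_left 1 0
  | succ k ih =>
    intro s hs
    have hne : (Finset.univ.filter fun i => s i = b).Nonempty := by
      rw [← Finset.card_pos, hs]; omega
    obtain ⟨i, hi⟩ := hne
    have hib : s i = b := (Finset.mem_filter.mp hi).2
    set s' := Function.update s i (!b) with hs'
    have hfe : (Finset.univ.filter fun j => s' j = b) =
        (Finset.univ.filter fun j => s j = b).erase i := by
      ext j
      simp only [Finset.mem_filter, Finset.mem_univ, true_and, Finset.mem_erase, hs',
        Function.update_apply]
      by_cases h : j = i <;> simp [h]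
    have hcard : (Finset.univ.filter fun j => s' j = b).card = k := by
      rw [hfe, Finset.card_erase_of_mem hi, hs]
      omega
    have hs_eq : Function.update s' i (!(s' i)) = s := by
      funext j
      by_cases h : j = i
      · subst h
        simp [hs', Function.update_self, hib]
      · simp [hs', Function.update_of_ne h]
    have hstep : f s ≤ f s' + 1 := by
      have h2 := hf.2 s' i
      rw [hs_eq, abs_le] at h2
      omega
    rcases Nat.eq_zero_or_pos k with hk | hk
    · subst hk
      have hsA : s' = fun _ => !b := all_eq_of_card_zero hcard
      have heq : s = Function.update (fun _ => !b) i b := by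
        rw [← hs_eq, hsA]; simp
      calc f s = f (Function.update (fun _ => !b) i b) := by rw [heq]
        _ ≤ f (fun _ => !b) := hadj i
        _ = 1 := hc
        _ ≤ max 1 (0 + 1) := le_max_left _ _
    · have := ih s' hcard
      have : f s' ≤ k := by omega
      omega

lemma alpha_add_beta {n : ℕ} (s : Fin n → Bool) : alpha s + beta s = n := by
  classical
  rw [alpha, beta]
  have h := Finset.card_filter_add_card_filter_not
    (s := (Finset.univ : Finset (Fin n))) (p := fun i => s i = false)
  rw [Finset.card_univ, Fintype.card_fin] at h
  have e : (Finset.filter (fun a => ¬s a = false) Finset.univ) =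
      Finset.filter (fun i => s i = true) Finset.univ := by
    ext i
    cases hi : s i <;> simp [hi]
  rw [e] at h
  exact h

lemma weight_apply {n : ℕ} (f : (Fin n → Bool) → ℕ) (s : Fin n → Bool) (k : ℤ) :
    (weight f s).coeff k = ((-P) ^ (f s - 1)).coeff (k - ((alpha s : ℤ) - beta s)) := by
  rw [weight, negP_eq, T_mul_apply]


/-- Abstract form of the `H_n` example: if `f` is pseudo-adequate with
`f(s_A) = f(s_B) = 1`, then `span ⟨f⟩ = 2n`; in particular, if `n` is odd then
`span ⟨f⟩` is not divisible by `4`. -/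
theorem lspan_bracket_eq_two_n {n : ℕ} (f : (Fin n → Bool) → ℕ)
    (hf : IsLoopCount f)
    (hA : ∀ i : Fin n, f (Function.update (fun _ => false) i true) ≤ f (fun _ => false))
    (hB : ∀ i : Fin n, f (Function.update (fun _ => true) i false) ≤ f (fun _ => true))
    (hfA : f (fun _ => false) = 1) (hfB : f (fun _ => true) = 1) :
    lspan (bracket f) = 2 * (n : ℤ) ∧
    (Odd n → ¬ (4 : ℤ) ∣ lspan (bracket f)) := by
  classical
  have hone : ∀ s, 1 ≤ f s := hf.1
  have Hβ : ∀ s : Fin n → Bool, f s ≤ max 1 (beta s) :=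
    fun s => count_bound f hf true hA hfA (beta s) s rfl
  have Hα : ∀ s : Fin n → Bool, f s ≤ max 1 (alpha s) :=
    fun s => count_bound f hf false hB hfB (alpha s) s rfl
  have key_hi : ∀ (s : Fin n → Bool) (k : ℤ), (n : ℤ) ≤ k →
      ((n : ℤ) < k ∨ s ≠ fun _ => false) → (weight f s).coeff k = 0 := by
    intro s k hk hor
    rw [weight_apply]
    apply negP_pow_apply_eq_zero
    left
    have hab := alpha_add_beta s
    by_cases hb : beta s = 0
    · have hsa : s = fun _ => false := all_eq_of_card_zero (b := true) hb
      have hkn : (n : ℤ) < k := by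
        rcases hor with h | h
        · exact h
        · exact absurd hsa h
      have hf1 : f s = 1 := le_antisymm (by simpa [hb] using Hβ s) (hone s)
      omega
    · have hfs : f s ≤ beta s := by have := Hβ s; omega
      omega
  have key_lo : ∀ (s : Fin n → Bool) (k : ℤ), k ≤ -(n : ℤ) →
      (k < -(n : ℤ) ∨ s ≠ fun _ => true) → (weight f s).coeff k = 0 := by
    intro s k hk hor
    rw [weight_apply]
    apply negP_pow_apply_eq_zero
    right
    have hab := alpha_add_beta s
    by_cases ha : alpha s = 0
    · have hsa : s = fun _ => true := all_eq_of_card_zero (b := false) ha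
      have hkn : k < -(n : ℤ) := by
        rcases hor with h | h
        · exact h
        · exact absurd hsa h
      have hf1 : f s = 1 := le_antisymm (by simpa [ha] using Hα s) (hone s)
      omega
    · have hfs : f s ≤ alpha s := by have := Hα s; omega
      omega
  have happ : ∀ k : ℤ, (bracket f).coeff k = ∑ s : Fin n → Bool, (weight f s).coeff k := by
    intro k
    rw [bracket, AddMonoidAlgebra.coeff_sum]
    exact Finsupp.finset_sum_apply _ _ _
  have hαA : alpha (fun _ : Fin n => false) = n := by simp [alpha]
  have hβA : beta (fun _ : Fin n => false) = 0 := by simp [beta]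
  have hαB : alpha (fun _ : Fin n => true) = 0 := by simp [alpha]
  have hβB : beta (fun _ : Fin n => true) = n := by simp [beta]
  have hcoeff_n : (bracket f).coeff (n : ℤ) = 1 := by
    rw [happ, Finset.sum_eq_single (fun _ => false)]
    · rw [weight_apply, hfA, hαA, hβA]
      have e : (n : ℤ) - ((n : ℤ) - (0 : ℕ)) = 0 := by push_cast; ring
      rw [e, show (1 : ℕ) - 1 = 0 from rfl, pow_zero, ← LaurentPolynomial.T_zero, T_apply,
        if_pos rfl]
    · intro s _ hne
      exact key_hi s n le_rfl (Or.inr hne)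
    · intro h
      exact absurd (Finset.mem_univ _) h
  have hcoeff_negn : (bracket f).coeff (-(n : ℤ)) = 1 := by
    rw [happ, Finset.sum_eq_single (fun _ => true)]
    · rw [weight_apply, hfB, hαB, hβB]
      have e : (-(n : ℤ)) - (((0 : ℕ) : ℤ) - (n : ℕ)) = 0 := by push_cast; ring
      rw [e, show (1 : ℕ) - 1 = 0 from rfl, pow_zero, ← LaurentPolynomial.T_zero, T_apply,
        if_pos rfl]
    · intro s _ hne
      exact key_lo s _ le_rfl (Or.inr hne)
    · intro h
      exact absurd (Finset.mem_univ _) h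
  have hcoeff_hi : ∀ k : ℤ, (n : ℤ) < k → (bracket f).coeff k = 0 := by
    intro k hk
    rw [happ]
    exact Finset.sum_eq_zero fun s _ => key_hi s k hk.le (Or.inl hk)
  have hcoeff_lo : ∀ k : ℤ, k < -(n : ℤ) → (bracket f).coeff k = 0 := by
    intro k hk
    rw [happ]
    exact Finset.sum_eq_zero fun s _ => key_lo s k hk.le (Or.inl hk)
  have hmemn : (n : ℤ) ∈ (bracket f).coeff.support :=
    Finsupp.mem_support_iff.mpr (by rw [hcoeff_n]; exact one_ne_zero)
  have hmemnegn : (-(n : ℤ)) ∈ (bracket f).coeff.support :=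
    Finsupp.mem_support_iff.mpr (by rw [hcoeff_negn]; exact one_ne_zero)
  have hmax : (bracket f).coeff.support.max = ((n : ℤ) : WithBot ℤ) := by
    apply le_antisymm
    · apply Finset.max_le
      intro a ha
      have hle : a ≤ (n : ℤ) := by
        by_contra h
        push_neg at h
        exact (Finsupp.mem_support_iff.mp ha) (hcoeff_hi a h)
      exact_mod_cast hle
    · exact Finset.le_max hmemn
  have hmin : (bracket f).coeff.support.min = ((-(n : ℤ)) : WithTop ℤ) := by
    apply le_antisymm
    · exact Finset.min_le hmemnegn
    · apply Finset.le_min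
      intro a ha
      have hle : -(n : ℤ) ≤ a := by
        by_contra h
        push_neg at h
        exact (Finsupp.mem_support_iff.mp ha) (hcoeff_lo a h)
      exact_mod_cast hle
  have hodeg : odeg (bracket f) = (n : ℤ) := by rw [odeg, hmax]; rfl
  have hudeg : udeg (bracket f) = -(n : ℤ) := by rw [udeg, hmin]; rfl
  have hspan : lspan (bracket f) = 2 * (n : ℤ) := by rw [lspan, hodeg, hudeg]; ring
  refine ⟨hspan, ?_⟩
  rintro ⟨t, ht⟩ ⟨c, hc⟩
  rw [hspan] at hc
  omega
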